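/- Let n be a natural number, d : Fin n → ℕ, and let X be a complex matrix indexed by (∀ j, Fin (d j)) × (∀ j, Fin (d j)). Let A₀ ⊆ Fin n be a set of coordinates, and define the partial transpose X^{T_{A₀}} by X^{T_{A₀}} a b = X a' b', where a' j = b j and b' j = a j for j ∈ A₀, and a' j = a j, b' j = b j for j ∉ A₀. Then for every family of vectors u : ∀ j, (Fin (d j) → ℂ) with Σ_i |u j i|² = 1 for each j, defining the product vector Ψ a = Π_j u j (a j), one has | Σ_{a,b} conj (Ψ a) · X a b · Ψ b | ≤ ‖X^{T_{A₀}}‖, where ‖·‖ denotes the ℓ²-operator norm. -/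

import Mathlib

/-- The partial transpose of a matrix `X` on the tensor product `⊗_j ℂ^(d j)` with respect
to the set of coordinates `A₀`: indices in `A₀` are transposed, the others are left alone. -/
def partialTranspose {n : ℕ} {d : Fin n → ℕ}
    (X : Matrix (∀ j, Fin (d j)) (∀ j, Fin (d j)) ℂ) (A₀ : Finset (Fin n)) :
    Matrix (∀ j, Fin (d j)) (∀ j, Fin (d j)) ℂ :=
  Matrix.of fun a b =>
    X (fun j => if j ∈ A₀ then b j else a j) (fun j => if j ∈ A₀ then a j else b j)

/-- The cross norm is bounded by the ℓ²-operator norm of any partial transpose: for every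
family of local unit vectors `u`, with product vector `Ψ a = ∏ j, u j (a j)`, one has
`|Σ_{a,b} conj (Ψ a) · X a b · Ψ b| ≤ ‖X^{T_{A₀}}‖`. -/
theorem crossNorm_le_opNorm_partialTranspose (n : ℕ) (d : Fin n → ℕ)
    (X : Matrix (∀ j, Fin (d j)) (∀ j, Fin (d j)) ℂ) (A₀ : Finset (Fin n))
    (u : ∀ j, Fin (d j) → ℂ) (hu : ∀ j, ∑ i, ‖u j i‖ ^ 2 = 1) :
    ‖∑ a, ∑ b,
        starRingEnd ℂ (∏ j, u j (a j)) * X a b * (∏ j, u j (b j))‖ ≤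
      ‖LinearMap.toContinuousLinearMap (Matrix.toEuclideanLin (partialTranspose X A₀))‖ := by
  classical
  set Y := partialTranspose X A₀ with hY
  let m : (∀ j, Fin (d j)) → (∀ j, Fin (d j)) → (∀ j, Fin (d j)) := fun x y j => if j ∈ A₀ then x j else y j
  have hmm : ∀ a b : ∀ j, Fin (d j), m (m a b) (m b a) = a := by
    intro a b; funext j; by_cases hj : j ∈ A₀ <;> simp [m, hj]
  let f : (∀ j, Fin (d j)) → ℂ := fun a => ∏ j, if j ∈ A₀ then u j (a j) else starRingEnd ℂ (u j (a j))
  let g : (∀ j, Fin (d j)) → ℂ := fun b => ∏ j, if j ∈ A₀ then starRingEnd ℂ (u j (b j)) else u j (b j)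
  have key : (∑ a : ∀ j, Fin (d j), ∑ b : ∀ j, Fin (d j),
        starRingEnd ℂ (∏ j, u j (a j)) * X a b * (∏ j, u j (b j)))
      = ∑ a : ∀ j, Fin (d j), ∑ b : ∀ j, Fin (d j), f a * Y a b * g b := by
    rw [← Fintype.sum_prod_type', ← Fintype.sum_prod_type']
    refine Fintype.sum_equiv
      ⟨fun p => (m p.2 p.1, m p.1 p.2), fun p => (m p.2 p.1, m p.1 p.2),
        fun p => by simp [hmm], fun p => by simp [hmm]⟩ _ _ fun p => ?_
    obtain ⟨a, b⟩ := p
    simp only [Equiv.coe_fn_mk]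
    have h1 : (fun j => if j ∈ A₀ then (m a b) j else (m b a) j) = a := by
      funext j; by_cases hj : j ∈ A₀ <;> simp [m, hj]
    have h2 : (fun j => if j ∈ A₀ then (m b a) j else (m a b) j) = b := by
      funext j; by_cases hj : j ∈ A₀ <;> simp [m, hj]
    have hX : Y (m b a) (m a b) = X a b := congrArg₂ X h1 h2
    have hfg : f (m b a) * g (m a b)
        = starRingEnd ℂ (∏ j, u j (a j)) * (∏ j, u j (b j)) := by
      simp only [f, g, m, map_prod, ← Finset.prod_mul_distrib]
      refine Finset.prod_congr rfl fun j _ => ?_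
      by_cases hj : j ∈ A₀ <;> simp [hj, mul_comm]
    rw [hX, show f (m b a) * X a b * g (m a b)
      = f (m b a) * g (m a b) * X a b from by ring, hfg]
    ring
  let F : EuclideanSpace ℂ (∀ j, Fin (d j)) := (WithLp.equiv 2 ((∀ j, Fin (d j)) → ℂ)).symm fun a => starRingEnd ℂ (f a)
  let G : EuclideanSpace ℂ (∀ j, Fin (d j)) := (WithLp.equiv 2 ((∀ j, Fin (d j)) → ℂ)).symm g
  have hinner : (∑ a : ∀ j, Fin (d j), ∑ b : ∀ j, Fin (d j), f a * Y a b * g b)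
      = inner ℂ F (Matrix.toEuclideanLin Y G) := by
    rw [show Matrix.toEuclideanLin Y G = (WithLp.equiv 2 ((∀ j, Fin (d j)) → ℂ)).symm (Matrix.toLin' Y g) from rfl]
    simp only [PiLp.inner_apply, RCLike.inner_apply]
    refine Finset.sum_congr rfl fun a _ => ?_
    simp only [F, WithLp.equiv_symm_apply, WithLp.ofLp_toLp, starRingEnd_self_apply, Matrix.toLin'_apply,
      Matrix.mulVec, dotProduct, Finset.mul_sum, Finset.sum_mul]
    exact Finset.sum_congr rfl fun b _ => by ring
  have hnormsum : ∑ a : ∀ j, Fin (d j), ∏ j, ‖u j (a j)‖ ^ 2 = 1 := by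
    rw [← Fintype.prod_sum (fun j i => ‖u j i‖ ^ 2)]
    · exact Finset.prod_eq_one fun j _ => by
        simpa using hu j
  have hF : ‖F‖ = 1 := by
    rw [EuclideanSpace.norm_eq]
    have : ∀ a : ∀ j, Fin (d j), ‖F a‖ ^ 2 = ∏ j, ‖u j (a j)‖ ^ 2 := by
      intro a
      rw [Finset.prod_pow]
      congr 1
      simp only [F, WithLp.equiv_symm_apply, WithLp.ofLp_toLp, RCLike.norm_conj, f]
      rw [norm_prod]
      exact Finset.prod_congr rfl fun j _ => by by_cases hj : j ∈ A₀ <;> simp [hj]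
    simp only [this, hnormsum, Real.sqrt_one]
  have hG : ‖G‖ = 1 := by
    rw [EuclideanSpace.norm_eq]
    have : ∀ a : ∀ j, Fin (d j), ‖G a‖ ^ 2 = ∏ j, ‖u j (a j)‖ ^ 2 := by
      intro a
      rw [Finset.prod_pow]
      congr 1
      simp only [G, WithLp.equiv_symm_apply, WithLp.ofLp_toLp, g]
      rw [norm_prod]
      exact Finset.prod_congr rfl fun j _ => by by_cases hj : j ∈ A₀ <;> simp [hj]
    simp only [this, hnormsum, Real.sqrt_one]
  rw [key, hinner]
  calc ‖(inner ℂ F (Matrix.toEuclideanLin Y G) : ℂ)‖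
      ≤ ‖F‖ * ‖Matrix.toEuclideanLin Y G‖ := norm_inner_le_norm F _
    _ = ‖LinearMap.toContinuousLinearMap (Matrix.toEuclideanLin Y) G‖ := by
        rw [hF, one_mul]; rfl
    _ ≤ ‖LinearMap.toContinuousLinearMap (Matrix.toEuclideanLin Y)‖ * ‖G‖ :=
        ContinuousLinearMap.le_opNorm _ _
    _ = _ := by rw [hG, mul_one]
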